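/- arXiv:1901.00264 — 3 statements merged into one kernel-verified Lean document; each statement's English description precedes it below -/
import Mathlib

section
/- Let a, b ≥ 2 be coprime natural numbers and let i ≥ 1. Then the number of natural numbers m with 1 ≤ m ≤ a·b·i and ℓ(a,b,m) = i is exactly (a−1)(b−1)/2. (Here (a−1)(b−1) is even since a and b are coprime.) -/
/-- `ell a b m` is the number of pairs `(i, j)` of positive integers with `m = a * i + b * j`. -/
noncomputable def ell (a b m : ℕ) : ℕ :=
  {p : ℕ × ℕ | 0 < p.1 ∧ 0 < p.2 ∧ m = a * p.1 + b * p.2}.ncard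

def pairsFinset (a b m : ℕ) : Finset (ℕ × ℕ) :=
  (Finset.Icc 1 m ×ˢ Finset.Icc 1 m).filter (fun p => 0 < p.1 ∧ 0 < p.2 ∧ m = a * p.1 + b * p.2)

lemma ell_eq_card (a b m : ℕ) (ha : 1 ≤ a) (hb : 1 ≤ b) :
    ell a b m = (pairsFinset a b m).card := by
  rw [ell, ← Set.ncard_coe_finset]
  congr 1
  ext p
  simp only [pairsFinset, Finset.coe_filter, Finset.mem_product, Finset.mem_Icc,
    Set.mem_setOf_eq, Finset.mem_coe]
  constructor
  · rintro ⟨h1, h2, h3⟩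
    refine ⟨⟨⟨h1, ?_⟩, ⟨h2, ?_⟩⟩, h1, h2, h3⟩
    · calc p.1 ≤ a * p.1 := Nat.le_mul_of_pos_left _ ha
        _ ≤ m := by omega
    · calc p.2 ≤ b * p.2 := Nat.le_mul_of_pos_left _ hb
        _ ≤ m := by omega
  · rintro ⟨_, h⟩; exact h

lemma rep_mod (a b x₁ y₁ x₂ y₂ : ℕ) (hab : Nat.gcd a b = 1)
    (h : a * x₁ + b * y₁ = a * x₂ + b * y₂) : x₁ ≡ x₂ [MOD b] := by
  have hab' : Nat.gcd b a = 1 := by rwa [Nat.gcd_comm]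
  have h1 : a * x₁ ≡ a * x₂ [MOD b] := by
    show a * x₁ % b = a * x₂ % b
    calc a * x₁ % b = (a * x₁ + b * y₁) % b := (Nat.add_mul_mod_self_left _ _ _).symm
      _ = (a * x₂ + b * y₂) % b := by rw [h]
      _ = a * x₂ % b := Nat.add_mul_mod_self_left _ _ _
  exact h1.cancel_left_of_coprime hab'

lemma quot_eq_aux (b x₁ x₂ : ℕ) (hb : 1 ≤ b) (hx₁ : 1 ≤ x₁) (hle : x₁ ≤ x₂)
    (hm : x₁ ≡ x₂ [MOD b]) (hq : (x₁ - 1) / b = (x₂ - 1) / b) : x₁ = x₂ := by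
  obtain ⟨t, ht⟩ := (Nat.modEq_iff_dvd' hle).mp hm
  have hx2 : x₂ - 1 = (x₁ - 1) + b * t := by omega
  rw [hx2, Nat.mul_comm, Nat.add_mul_div_right _ _ (by omega : 0 < b)] at hq
  have : t = 0 := by omega
  rw [this, Nat.mul_zero] at ht
  omega

lemma rep_eq (a b x₁ y₁ x₂ y₂ : ℕ) (hab : Nat.gcd a b = 1) (hb : 1 ≤ b)
    (hx₁ : 1 ≤ x₁) (hx₂ : 1 ≤ x₂)
    (h : a * x₁ + b * y₁ = a * x₂ + b * y₂)
    (hq : (x₁ - 1) / b = (x₂ - 1) / b) : x₁ = x₂ := by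
  have hm := rep_mod a b x₁ y₁ x₂ y₂ hab h
  rcases Nat.le_total x₁ x₂ with hle | hle
  · exact quot_eq_aux b x₁ x₂ hb hx₁ hle hm hq
  · exact (quot_eq_aux b x₂ x₁ hb hx₂ hle hm.symm hq.symm).symm

lemma mod_eq_of_Icc (b x₁ x₂ : ℕ) (h : x₁ ≡ x₂ [MOD b])
    (h1 : 1 ≤ x₁) (h1' : x₁ ≤ b) (h2 : 1 ≤ x₂) (h2' : x₂ ≤ b) : x₁ = x₂ := by
  rcases Nat.le_total x₁ x₂ with hle | hle
  · obtain ⟨t, ht⟩ := (Nat.modEq_iff_dvd' hle).mp h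
    rcases Nat.eq_zero_or_pos t with h0 | h0
    · rw [h0, Nat.mul_zero] at ht; omega
    · have hbt : b ≤ b * t := Nat.le_mul_of_pos_right b h0
      generalize b * t = s at ht hbt; omega
  · obtain ⟨t, ht⟩ := (Nat.modEq_iff_dvd' hle).mp h.symm
    rcases Nat.eq_zero_or_pos t with h0 | h0
    · rw [h0, Nat.mul_zero] at ht; omega
    · have hbt : b ≤ b * t := Nat.le_mul_of_pos_right b h0
      generalize b * t = s at ht hbt; omega

lemma mem_pairsFinset {a b m : ℕ} {p : ℕ × ℕ} (ha : 1 ≤ a) (hb : 1 ≤ b) :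
    p ∈ pairsFinset a b m ↔ 0 < p.1 ∧ 0 < p.2 ∧ m = a * p.1 + b * p.2 := by
  simp only [pairsFinset, Finset.mem_filter, Finset.mem_product, Finset.mem_Icc]
  constructor
  · rintro ⟨_, h⟩; exact h
  · rintro ⟨h1, h2, h3⟩
    refine ⟨⟨⟨h1, ?_⟩, ⟨h2, ?_⟩⟩, h1, h2, h3⟩
    · calc p.1 ≤ a * p.1 := Nat.le_mul_of_pos_left _ ha
        _ ≤ m := by omega
    · calc p.2 ≤ b * p.2 := Nat.le_mul_of_pos_left _ hb
        _ ≤ m := by omega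

lemma ell_le (a b m k : ℕ) (ha : 1 ≤ a) (hb : 1 ≤ b) (hab : Nat.gcd a b = 1)
    (hm : m ≤ a * b * k) : ell a b m ≤ k := by
  rw [ell_eq_card a b m ha hb]
  have : (pairsFinset a b m).card ≤ (Finset.range k).card := by
    apply Finset.card_le_card_of_injOn (fun p => (p.1 - 1) / b)
    · intro p hp
      rw [Finset.mem_coe, mem_pairsFinset ha hb] at hp
      obtain ⟨h1, h2, h3⟩ := hp
      simp only [Finset.mem_coe, Finset.mem_range]
      have hx : p.1 < b * k := by
        have h4 : a * p.1 < a * (b * k) := by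
          have : b * 1 ≤ b * p.2 := by
            apply Nat.mul_le_mul_left; omega
          calc a * p.1 < a * p.1 + b * p.2 := by omega
            _ = m := h3.symm
            _ ≤ a * b * k := hm
            _ = a * (b * k) := by ring
        exact Nat.lt_of_mul_lt_mul_left h4
      have : p.1 - 1 < b * k := by omega
      rw [Nat.div_lt_iff_lt_mul (by omega : 0 < b), Nat.mul_comm k b]
      omega
    · intro p hp q hq hpq
      rw [Finset.mem_coe, mem_pairsFinset ha hb] at hp hq
      obtain ⟨hp1, hp2, hp3⟩ := hp
      obtain ⟨hq1, hq2, hq3⟩ := hq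
      have hx : p.1 = q.1 := rep_eq a b p.1 p.2 q.1 q.2 hab hb hp1 hq1 (by omega) hpq
      have hy : p.2 = q.2 := by
        rw [hx] at hp3
        have : b * p.2 = b * q.2 := by omega
        exact Nat.eq_of_mul_eq_mul_left (by omega) this
      exact Prod.ext hx hy
  simpa using this

-- existence of a small representative solution
lemma exists_small (a b m : ℕ) (ha : 1 ≤ a) (hb : 1 ≤ b) (hab : Nat.gcd a b = 1)
    (hm : 1 ≤ m) : ∃ x j, 1 ≤ x ∧ x ≤ b ∧ 1 ≤ j ∧ m + a * b = a * x + b * j := by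
  haveI : NeZero b := ⟨by omega⟩
  set r : ℕ := ((a : ZMod b)⁻¹ * (m : ZMod b)).val with hr
  set x : ℕ := if r = 0 then b else r with hx
  have hrb : r < b := ZMod.val_lt _
  have hx1 : 1 ≤ x := by rw [hx]; split <;> omega
  have hxb : x ≤ b := by rw [hx]; split <;> omega
  have hxz : (x : ZMod b) = (a : ZMod b)⁻¹ * (m : ZMod b) := by
    rw [hx]
    split
    · rename_i h0
      rw [ZMod.natCast_self]
      exact ((ZMod.val_eq_zero _).mp (by rw [← hr]; exact h0)).symm
    · rw [hr, ZMod.natCast_val, ZMod.cast_id]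
  have hmod : a * x ≡ m [MOD b] := by
    rw [← ZMod.natCast_eq_natCast_iff]
    push_cast
    rw [hxz, ← mul_assoc, ZMod.coe_mul_inv_eq_one a hab, one_mul]
  have hle : a * x ≤ m + a * b := by
    have : a * x ≤ a * b := Nat.mul_le_mul_left a hxb
    omega
  have hmod2 : a * x ≡ m + a * b [MOD b] := by
    have h5 : m ≡ m + a * b [MOD b] := by
      show m % b = (m + a * b) % b
      rw [Nat.mul_comm a b]
      exact (Nat.add_mul_mod_self_left m b a).symm
    exact hmod.trans h5
  obtain ⟨c, hc⟩ := (Nat.modEq_iff_dvd' hle).mp hmod2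
  have hc1 : 1 ≤ c := by
    rcases Nat.eq_zero_or_pos c with h0 | h0
    · rw [h0, Nat.mul_zero] at hc
      have : a * x ≤ a * b := Nat.mul_le_mul_left a hxb
      omega
    · exact h0
  exact ⟨x, c, hx1, hxb, hc1, by omega⟩

lemma ell_shift (a b m : ℕ) (ha : 2 ≤ a) (hb : 2 ≤ b) (hab : Nat.gcd a b = 1)
    (hm : 1 ≤ m) : ell a b (m + a * b) = ell a b m + 1 := by
  have ha1 : (1:ℕ) ≤ a := by omega
  have hb1 : (1:ℕ) ≤ b := by omega
  rw [ell_eq_card a b _ ha1 hb1, ell_eq_card a b m ha1 hb1]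
  rw [← Finset.card_filter_add_card_filter_not (fun p : ℕ × ℕ => b < p.1)
    (s := pairsFinset a b (m + a * b))]
  congr 1
  -- big-x part bijects with pairsFinset a b m
  · refine Finset.card_bij' (fun p _ => (p.1 - b, p.2)) (fun p _ => (p.1 + b, p.2)) ?hi ?hj ?li ?ri
    case hi =>
      intro p hp
      rw [Finset.mem_filter, mem_pairsFinset ha1 hb1] at hp
      obtain ⟨⟨h1, h2, h3⟩, h4⟩ := hp
      rw [mem_pairsFinset ha1 hb1]
      refine ⟨by simp; omega, by simpa using h2, ?_⟩
      simp only
      have : a * (p.1 - b) = a * p.1 - a * b := by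
        rw [Nat.mul_sub]
      have hab' : a * b ≤ a * p.1 := Nat.mul_le_mul_left a (by omega)
      omega
    case hj =>
      intro p hp
      rw [mem_pairsFinset ha1 hb1] at hp
      obtain ⟨h1, h2, h3⟩ := hp
      rw [Finset.mem_filter, mem_pairsFinset ha1 hb1]
      refine ⟨⟨by simp; omega, by simpa using h2, ?_⟩, by simp; omega⟩
      simp only
      have : a * (p.1 + b) = a * p.1 + a * b := by ring
      omega
    case li =>
      intro p hp
      rw [Finset.mem_filter] at hp
      have hbp : b < p.1 := hp.2
      show (p.1 - b + b, p.2) = p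
      exact Prod.ext (by omega) rfl
    case ri =>
      intro p hp
      show (p.1 + b - b, p.2) = p
      exact Prod.ext (by omega) rfl
  -- small-x part is a singleton
  · obtain ⟨x, j, hx1, hxb, hj1, heq⟩ := exists_small a b m ha1 hb1 hab hm
    have hmem : (x, j) ∈ (pairsFinset a b (m + a * b)).filter (fun p => ¬ b < p.1) := by
      rw [Finset.mem_filter, mem_pairsFinset ha1 hb1]
      exact ⟨⟨by omega, by omega, heq⟩, by omega⟩
    rw [Finset.card_eq_one]
    refine ⟨(x, j), Finset.eq_singleton_iff_unique_mem.mpr ⟨hmem, ?_⟩⟩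
    intro q hq
    rw [Finset.mem_filter, mem_pairsFinset ha1 hb1] at hq
    obtain ⟨⟨h1, h2, h3⟩, h4⟩ := hq
    have hmx : q.1 = x := by
      apply mod_eq_of_Icc b q.1 x
      · exact rep_mod a b q.1 q.2 x j hab (by omega)
      all_goals omega
    have hmy : q.2 = j := by
      rw [hmx] at h3
      have : b * q.2 = b * j := by omega
      exact Nat.eq_of_mul_eq_mul_left (by omega) this
    exact Prod.ext hmx hmy

lemma ell_shift_iter (a b m k : ℕ) (ha : 2 ≤ a) (hb : 2 ≤ b) (hab : Nat.gcd a b = 1)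
    (hm : 1 ≤ m) : ell a b (m + a * b * k) = ell a b m + k := by
  induction k with
  | zero => simp
  | succ n ih =>
      have h1 : m + a * b * (n + 1) = (m + a * b * n) + a * b := by ring
      rw [h1, ell_shift a b (m + a * b * n) ha hb hab (by omega), ih]
      omega

lemma not_on_line (a b x y : ℕ) (ha : 2 ≤ a) (hb : 2 ≤ b) (hab : Nat.gcd a b = 1)
    (hx1 : 1 ≤ x) (hxb : x ≤ b - 1) (hy1 : 1 ≤ y) : a * x + b * y ≠ a * b := by
  intro h
  have e3 : b * a = a * b := Nat.mul_comm b a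
  have hby : b * y ≤ b * a := by omega
  have hya : y ≤ a := Nat.le_of_mul_le_mul_left hby (by omega)
  have hdvd : b ∣ a * x := by
    have : a * x = b * (a - y) := by
      rw [Nat.mul_sub]
      omega
    exact ⟨a - y, this⟩
  have hba : Nat.Coprime b a := Nat.coprime_comm.mp hab
  have : b ∣ x := hba.dvd_of_dvd_mul_left hdvd
  have : b ≤ x := Nat.le_of_dvd (by omega) this
  omega

lemma card_triangle (a b : ℕ) (ha : 2 ≤ a) (hb : 2 ≤ b) (hab : Nat.gcd a b = 1) :
    ((Finset.Icc 1 (b-1) ×ˢ Finset.Icc 1 (a-1)).filter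
      (fun p => a * p.1 + b * p.2 < a * b)).card = (a - 1) * (b - 1) / 2 := by
  have key : ((Finset.Icc 1 (b-1) ×ˢ Finset.Icc 1 (a-1)).filter
      (fun p => a * p.1 + b * p.2 < a * b)).card =
      ((Finset.Icc 1 (b-1) ×ˢ Finset.Icc 1 (a-1)).filter
      (fun p => ¬ a * p.1 + b * p.2 < a * b)).card := by
    refine Finset.card_bij' (fun p _ => (b - p.1, a - p.2)) (fun p _ => (b - p.1, a - p.2))
      ?hi ?hj ?li ?ri
    case hi =>
      intro p hp
      simp only [Finset.mem_filter, Finset.mem_product, Finset.mem_Icc, not_lt] at hp ⊢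
      obtain ⟨⟨⟨hx1, hxb⟩, hy1, hya⟩, hlt⟩ := hp
      refine ⟨⟨⟨by omega, by omega⟩, by omega, by omega⟩, ?_⟩
      have e1 : a * (b - p.1) = a * b - a * p.1 := by rw [Nat.mul_sub]
      have e2 : b * (a - p.2) = b * a - b * p.2 := by rw [Nat.mul_sub]
      have e3 : b * a = a * b := Nat.mul_comm b a
      have hax : a * p.1 ≤ a * b := Nat.mul_le_mul_left a (by omega)
      have hby : b * p.2 ≤ b * a := Nat.mul_le_mul_left b (by omega)
      omega
    case hj =>
      intro p hp
      simp only [Finset.mem_filter, Finset.mem_product, Finset.mem_Icc, not_lt] at hp ⊢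
      obtain ⟨⟨⟨hx1, hxb⟩, hy1, hya⟩, hlt⟩ := hp
      have hne := not_on_line a b p.1 p.2 ha hb hab hx1 hxb hy1
      have hgt : a * b < a * p.1 + b * p.2 := by omega
      refine ⟨⟨⟨by omega, by omega⟩, by omega, by omega⟩, ?_⟩
      have e1 : a * (b - p.1) = a * b - a * p.1 := by rw [Nat.mul_sub]
      have e2 : b * (a - p.2) = b * a - b * p.2 := by rw [Nat.mul_sub]
      have e3 : b * a = a * b := Nat.mul_comm b a
      have hax : a * p.1 ≤ a * b := Nat.mul_le_mul_left a (by omega)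
      have hby : b * p.2 ≤ b * a := Nat.mul_le_mul_left b (by omega)
      omega
    case li =>
      intro p hp
      simp only [Finset.mem_filter, Finset.mem_product, Finset.mem_Icc] at hp
      obtain ⟨⟨⟨hx1, hxb⟩, hy1, hya⟩, _⟩ := hp
      show (b - (b - p.1), a - (a - p.2)) = p
      exact Prod.ext (by omega) (by omega)
    case ri =>
      intro p hp
      simp only [Finset.mem_filter, Finset.mem_product, Finset.mem_Icc] at hp
      obtain ⟨⟨⟨hx1, hxb⟩, hy1, hya⟩, _⟩ := hp
      show (b - (b - p.1), a - (a - p.2)) = p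
      exact Prod.ext (by omega) (by omega)
  have hsum := Finset.card_filter_add_card_filter_not
    (s := Finset.Icc 1 (b-1) ×ˢ Finset.Icc 1 (a-1))
    (fun p : ℕ × ℕ => a * p.1 + b * p.2 < a * b)
  have hScard : (Finset.Icc 1 (b-1) ×ˢ Finset.Icc 1 (a-1)).card = (a - 1) * (b - 1) := by
    rw [Finset.card_product, Nat.card_Icc, Nat.card_Icc, Nat.mul_comm]
    congr 1 <;> omega
  omega

lemma card_M1 (a b : ℕ) (ha : 2 ≤ a) (hb : 2 ≤ b) (hab : Nat.gcd a b = 1) :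
    ((Finset.Icc 1 (a * b)).filter (fun m => ell a b m = 1)).card =
      (a - 1) * (b - 1) / 2 := by
  have ha1 : (1:ℕ) ≤ a := by omega
  have hb1 : (1:ℕ) ≤ b := by omega
  rw [← card_triangle a b ha hb hab]
  symm
  apply Finset.card_bij (fun p _ => a * p.1 + b * p.2)
  · intro p hp
    simp only [Finset.mem_filter, Finset.mem_product, Finset.mem_Icc] at hp
    obtain ⟨⟨⟨hx1, hxb⟩, hy1, hya⟩, hlt⟩ := hp
    rw [Finset.mem_filter, Finset.mem_Icc]
    have hpos : 1 ≤ a * p.1 + b * p.2 := by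
      have : 1 ≤ a * p.1 := Nat.one_le_iff_ne_zero.mpr (by positivity)
      omega
    refine ⟨⟨hpos, by omega⟩, ?_⟩
    have hge : 1 ≤ ell a b (a * p.1 + b * p.2) := by
      rw [ell_eq_card _ _ _ ha1 hb1]
      rw [Nat.one_le_iff_ne_zero, ← Nat.pos_iff_ne_zero, Finset.card_pos]
      exact ⟨p, (mem_pairsFinset ha1 hb1).mpr ⟨by omega, by omega, rfl⟩⟩
    have hle : ell a b (a * p.1 + b * p.2) ≤ 1 :=
      ell_le a b _ 1 ha1 hb1 hab (by omega)
    omega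
  · intro p hp q hq hpq
    simp only [Finset.mem_filter, Finset.mem_product, Finset.mem_Icc] at hp hq
    obtain ⟨⟨⟨hpx1, hpxb⟩, hpy1, hpya⟩, _⟩ := hp
    obtain ⟨⟨⟨hqx1, hqxb⟩, hqy1, hqya⟩, _⟩ := hq
    have hx : p.1 = q.1 := by
      apply mod_eq_of_Icc b p.1 q.1 (rep_mod a b p.1 p.2 q.1 q.2 hab hpq) <;> omega
    have hy : p.2 = q.2 := by
      rw [hx] at hpq
      have : b * p.2 = b * q.2 := by omega
      exact Nat.eq_of_mul_eq_mul_left (by omega) this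
    exact Prod.ext hx hy
  · intro m hm
    rw [Finset.mem_filter, Finset.mem_Icc] at hm
    obtain ⟨⟨hm1, hmab⟩, hell⟩ := hm
    rw [ell_eq_card _ _ _ ha1 hb1] at hell
    obtain ⟨p, hp⟩ := Finset.card_pos.mp (show 0 < (pairsFinset a b m).card by omega)
    rw [mem_pairsFinset ha1 hb1] at hp
    obtain ⟨hx1, hy1, hrep⟩ := hp
    have hne : a * p.1 + b * p.2 ≠ a * b := by
      intro h
      have e3 : b * a = a * b := Nat.mul_comm b a
      have hby : b * p.2 ≤ b * a := by omega
      have hya : p.2 ≤ a := Nat.le_of_mul_le_mul_left hby (by omega)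
      have hdd : a * p.1 = b * (a - p.2) := by
        have e4 : b * (a - p.2) = b * a - b * p.2 := Nat.mul_sub b a p.2
        omega
      have hdvd : b ∣ a * p.1 := ⟨a - p.2, hdd⟩
      have hba : Nat.Coprime b a := Nat.coprime_comm.mp hab
      have hbx : b ≤ p.1 := Nat.le_of_dvd (by omega) (hba.dvd_of_dvd_mul_left hdvd)
      have : a * b ≤ a * p.1 := Nat.mul_le_mul_left a hbx
      have hbp : 0 < b * p.2 := Nat.mul_pos (by omega) (by omega)
      omega
    have hlt : a * p.1 + b * p.2 < a * b := by omega
    have hxb : p.1 ≤ b - 1 := by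
      have : a * p.1 < a * b := by
        have : 1 ≤ b * p.2 := Nat.one_le_iff_ne_zero.mpr (by positivity)
        omega
      have := Nat.lt_of_mul_lt_mul_left this
      omega
    have hya : p.2 ≤ a - 1 := by
      have h4 : b * p.2 < b * a := by
        have : 1 ≤ a * p.1 := Nat.one_le_iff_ne_zero.mpr (by positivity)
        have e3 : b * a = a * b := Nat.mul_comm b a
        omega
      have := Nat.lt_of_mul_lt_mul_left h4
      omega
    refine ⟨p, ?_, hrep.symm⟩
    simp only [Finset.mem_filter, Finset.mem_product, Finset.mem_Icc]
    exact ⟨⟨⟨hx1, hxb⟩, hy1, hya⟩, hlt⟩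

theorem card_M_i (a b : ℕ) (ha : 2 ≤ a) (hb : 2 ≤ b)
    (hab : Nat.gcd a b = 1) (i : ℕ) (hi : 1 ≤ i) :
    ((Finset.Icc 1 (a * b * i)).filter (fun m => ell a b m = i)).card =
      (a - 1) * (b - 1) / 2 := by
  have ha1 : (1:ℕ) ≤ a := by omega
  have hb1 : (1:ℕ) ≤ b := by omega
  rw [← card_M1 a b ha hb hab]
  apply Finset.card_bij (fun m _ => m - a * b * (i - 1))
  · intro m hm
    rw [Finset.mem_filter, Finset.mem_Icc] at hm
    obtain ⟨⟨hm1, hmi⟩, hell⟩ := hm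
    have hgt : a * b * (i - 1) < m := by
      by_contra hle
      push_neg at hle
      have := ell_le a b m (i - 1) ha1 hb1 hab hle
      omega
    rw [Finset.mem_filter, Finset.mem_Icc]
    have habi : a * b * i = a * b * (i - 1) + a * b := by
      have h2 := Nat.mul_succ (a * b) (i - 1)
      simp only [Nat.succ_eq_add_one] at h2
      have h3 : i - 1 + 1 = i := by omega
      rw [h3] at h2
      omega
    refine ⟨⟨by omega, by omega⟩, ?_⟩
    have hsh := ell_shift_iter a b (m - a * b * (i - 1)) (i - 1) ha hb hab (by omega)
    have hmm : m - a * b * (i - 1) + a * b * (i - 1) = m := by omega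
    rw [hmm] at hsh
    omega
  · intro m hm m' hm' heq
    rw [Finset.mem_filter, Finset.mem_Icc] at hm hm'
    have hgt : a * b * (i - 1) < m := by
      by_contra hle
      push_neg at hle
      have := ell_le a b m (i - 1) ha1 hb1 hab hle
      omega
    have hgt' : a * b * (i - 1) < m' := by
      by_contra hle
      push_neg at hle
      have := ell_le a b m' (i - 1) ha1 hb1 hab hle
      omega
    omega
  · intro m hm
    rw [Finset.mem_filter, Finset.mem_Icc] at hm
    obtain ⟨⟨hm1, hmab⟩, hell⟩ := hm
    refine ⟨m + a * b * (i - 1), ?_, by omega⟩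
    rw [Finset.mem_filter, Finset.mem_Icc]
    have habi : a * b * i = a * b * (i - 1) + a * b := by
      have h2 := Nat.mul_succ (a * b) (i - 1)
      simp only [Nat.succ_eq_add_one] at h2
      have h3 : i - 1 + 1 = i := by omega
      rw [h3] at h2
      omega
    have hsh := ell_shift_iter a b m (i - 1) ha hb hab hm1
    refine ⟨⟨by omega, by omega⟩, by omega⟩
end

section
/- Let a, b ≥ 2 be coprime natural numbers, let p be a prime, and let i ≥ 1. Then the sum over the finite set of natural numbers m ≥ 1 with ℓ(a,b,m) < i of the p-adic valuation ν_p(m) equals ν_p((a·b·i)!) − ν_p(M_i), where M_i denotes the product of all natural numbers m with 1 ≤ m ≤ a·b·i and ℓ(a,b,m) = i. -/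
namespace EllAux

lemma setOf_finite (a b m : ℕ) (ha : 2 ≤ a) (hb : 2 ≤ b) :
    {p : ℕ × ℕ | 0 < p.1 ∧ 0 < p.2 ∧ m = a * p.1 + b * p.2}.Finite := by
  apply Set.Finite.subset (Set.finite_Icc (1, 1) (m, m))
  rintro ⟨x, y⟩ ⟨hx, hy, hm⟩
  simp only [Set.mem_Icc, Prod.le_def]
  refine ⟨⟨hx, hy⟩, ?_, ?_⟩ <;> nlinarith

lemma div_helper (a y y' : ℕ) (ha : 2 ≤ a) (hy : 1 ≤ y) (hle : y ≤ y')
    (hmod : y ≡ y' [MOD a]) (hdiv : (y - 1) / a = (y' - 1) / a) : y = y' := by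
  obtain ⟨k, hk⟩ := (Nat.modEq_iff_dvd' hle).mp hmod
  have hy' : y' - 1 = (y - 1) + a * k := by omega
  rw [hy', Nat.add_mul_div_left _ _ (by omega : 0 < a)] at hdiv
  have hk0 : k = 0 := by omega
  subst hk0
  simp only [mul_zero] at hk
  omega

lemma eq_of_mem (a b m : ℕ) (ha : 2 ≤ a) (hab : Nat.gcd a b = 1)
    {x y x' y' : ℕ} (h : a * x + b * y = a * x' + b * y')
    (hmod : (y - 1) / a = (y' - 1) / a) (hy : 1 ≤ y) (hy' : 1 ≤ y') :
    x = x' ∧ y = y' := by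
  have hm : b * y ≡ b * y' [MOD a] := by
    have h1 : (b * y + a * x) % a = (b * y' + a * x') % a := by
      rw [show b * y + a * x = a * x + b * y by ring,
        show b * y' + a * x' = a * x' + b * y' by ring, h]
    unfold Nat.ModEq
    rwa [Nat.add_mul_mod_self_left, Nat.add_mul_mod_self_left] at h1
  have hyy : y ≡ y' [MOD a] := Nat.ModEq.cancel_left_of_coprime hab hm
  have heq : y = y' := by
    rcases le_total y y' with hle | hle
    · exact div_helper a y y' ha hy hle hyy hmod
    · exact (div_helper a y' y ha hy' hle hyy.symm hmod.symm).symm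
  subst heq
  refine ⟨?_, rfl⟩
  have h2 : a * x = a * x' := by omega
  exact Nat.eq_of_mul_eq_mul_left (by omega) h2

/-- Upper bound: if `m ≤ a*b*i` then `ell a b m ≤ i`. -/
lemma ell_le (a b m i : ℕ) (ha : 2 ≤ a) (hb : 2 ≤ b) (hab : Nat.gcd a b = 1)
    (hm : m ≤ a * b * i) : ell a b m ≤ i := by
  set S := {p : ℕ × ℕ | 0 < p.1 ∧ 0 < p.2 ∧ m = a * p.1 + b * p.2} with hS
  set f : ℕ × ℕ → ℕ := fun p => (p.2 - 1) / a with hf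
  have hinj : Set.InjOn f S := by
    rintro ⟨x, y⟩ ⟨hx, hy, hxy⟩ ⟨x', y'⟩ ⟨hx', hy', hxy'⟩ hfeq
    have h : a * x + b * y = a * x' + b * y' := hxy.symm.trans hxy'
    obtain ⟨h1, h2⟩ := eq_of_mem a b m ha hab h hfeq hy hy'
    simp [h1, h2]
  have hsub : f '' S ⊆ Set.Iio i := by
    rintro t ⟨⟨x, y⟩, ⟨hx, hy, hxy⟩, rfl⟩
    simp only [Set.mem_Iio]
    dsimp only at hx hy hxy ⊢
    have hylt : y < a * i := by
      by_contra hcon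
      push_neg at hcon
      have h1 : b * (a * i) ≤ b * y := Nat.mul_le_mul_left b hcon
      nlinarith
    show (y - 1) / a < i
    rw [Nat.div_lt_iff_lt_mul (by omega : 0 < a)]
    have hcomm : a * i = i * a := mul_comm a i
    omega
  calc ell a b m = (f '' S).ncard := (Set.ncard_image_of_injOn hinj).symm
    _ ≤ (Set.Iio i).ncard := Set.ncard_le_ncard hsub (Set.finite_Iio i)
    _ = i := by rw [← Finset.coe_Iio, Set.ncard_coe_finset, Nat.card_Iio]

/-- Lower bound: if `a*b*i < m` then `i ≤ ell a b m`. -/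
lemma le_ell (a b m i : ℕ) (ha : 2 ≤ a) (hb : 2 ≤ b) (hab : Nat.gcd a b = 1)
    (hi : 1 ≤ i) (hm : a * b * i < m) : i ≤ ell a b m := by
  haveI : NeZero a := ⟨by omega⟩
  obtain ⟨j, rfl⟩ : ∃ j, i = j + 1 := ⟨i - 1, by omega⟩
  set S := {p : ℕ × ℕ | 0 < p.1 ∧ 0 < p.2 ∧ m = a * p.1 + b * p.2} with hS
  have hfin : S.Finite := setOf_finite a b m ha hb
  set c : ℕ := (((b : ZMod a))⁻¹ * (m : ZMod a)).val with hc
  have hclt : c < a := ZMod.val_lt _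
  have hunit : (b : ZMod a) * (b : ZMod a)⁻¹ = 1 := by
    rw [ZMod.mul_inv_eq_gcd, ZMod.val_natCast, ← Nat.gcd_rec, hab, Nat.cast_one]
  have hbc : b * c ≡ m [MOD a] := by
    have h1 : ((b * c : ℕ) : ZMod a) = ((m : ℕ) : ZMod a) := by
      push_cast
      rw [hc, ZMod.natCast_val, ZMod.cast_id, ← mul_assoc, hunit, one_mul]
    exact (ZMod.natCast_eq_natCast_iff _ _ _).mp h1
  -- the shifted residue, guaranteed positive
  set c' : ℕ := if c = 0 then a else c with hc'
  have hc'pos : 1 ≤ c' := by by_cases h : c = 0 <;> simp [hc', h] <;> omega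
  have hc'le : c' ≤ a := by by_cases h : c = 0 <;> simp [hc', h] <;> omega
  have hbc' : b * c' ≡ m [MOD a] := by
    by_cases h : c = 0
    · simp only [hc', if_pos h]
      calc b * a ≡ b * 0 [MOD a] := Nat.modEq_zero_iff_dvd.mpr ⟨b, mul_comm b a⟩
        _ = b * c := by rw [h]
        _ ≡ m [MOD a] := hbc
    · simpa [hc', if_neg h] using hbc
  -- key inequality
  have hkey : b * c' + a * b * j + a ≤ m := by
    set r : ℕ := m - a * b * (j + 1) with hr
    have hrm : m = a * b * (j + 1) + r := by omega
    have hr1 : 1 ≤ r := by omega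
    by_cases h : c = 0
    · -- a ∣ m, so a ∣ r, so r ≥ a
      have hdvd : a ∣ m := by
        have h0 := hbc; rw [h, mul_zero] at h0
        exact Nat.modEq_zero_iff_dvd.mp h0.symm
      have habi : a ∣ a * b * (j + 1) := ⟨b * (j + 1), by ring⟩
      have hra : a ∣ r := by
        rw [hr]
        exact Nat.dvd_sub hdvd habi
      have har : a ≤ r := Nat.le_of_dvd (by omega) hra
      simp only [hc', if_pos h]
      nlinarith
    · simp only [hc', if_neg h]
      have hcr : b * c ≡ r [MOD a] := by
        calc b * c ≡ m [MOD a] := hbc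
          _ = a * b * (j + 1) + r := hrm
          _ ≡ 0 + r [MOD a] :=
            Nat.ModEq.add_right r (Nat.modEq_zero_iff_dvd.mpr ⟨b * (j + 1), by ring⟩)
          _ = r := by rw [zero_add]
      have hble : b * c ≤ a * b - b := by
        have hc1 : c ≤ a - 1 := by omega
        have h4 : b * c ≤ b * (a - 1) := Nat.mul_le_mul_left b hc1
        have h5 : b * a = b * (a - 1) + b := by
          have ha1 : a - 1 + 1 = a := by omega
          calc b * a = b * (a - 1 + 1) := by rw [ha1]
            _ = b * (a - 1) + b := by ring
        have h6 : a * b = b * a := mul_comm a b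
        omega
      have hgoal : b * c + a ≤ a * b + r := by
        by_contra hcon
        push_neg at hcon
        have haab : a ≤ a * b := Nat.le_mul_of_pos_right a (by omega)
        have h2 : a * b - a + r ≤ b * c := by omega
        have h3 : a * b - a + r ≡ r [MOD a] := by
          calc a * b - a + r ≡ 0 + r [MOD a] :=
            Nat.ModEq.add_right r (Nat.modEq_zero_iff_dvd.mpr ⟨b - 1, by
              have hb1 : b - 1 + 1 = b := by omega
              have hh : a * b = a * (b - 1) + a := by
                calc a * b = a * (b - 1 + 1) := by rw [hb1]
                  _ = a * (b - 1) + a := by ring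
              omega⟩)
          _ = r := by rw [zero_add]
        have hdd : a ∣ b * c - (a * b - a + r) :=
          (Nat.modEq_iff_dvd' h2).mp (h3.trans hcr.symm)
        have hpos : 0 < b * c - (a * b - a + r) := by omega
        have hge := Nat.le_of_dvd hpos hdd
        omega
      nlinarith
  -- construct j + 1 elements of S
  set g : ℕ → ℕ × ℕ := fun t => ((m - b * (c' + t * a)) / a, c' + t * a) with hg
  have hmem : ∀ t < j + 1, g t ∈ S := by
    intro t ht
    have hyt : b * (c' + t * a) + a ≤ m := by
      have htj : t ≤ j := by omega
      have h1 : b * (c' + t * a) = b * c' + b * t * a := by ring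
      have h2 : b * t * a ≤ a * b * j := by
        calc b * t * a = a * b * t := by ring
          _ ≤ a * b * j := Nat.mul_le_mul_left _ htj
      omega
    have hmod : b * (c' + t * a) ≡ m [MOD a] := by
      calc b * (c' + t * a) = b * c' + b * t * a := by ring
        _ ≡ b * c' + 0 [MOD a] :=
          Nat.ModEq.add_left _ (Nat.modEq_zero_iff_dvd.mpr ⟨b * t, by ring⟩)
        _ = b * c' := by rw [add_zero]
        _ ≡ m [MOD a] := hbc'
    have hdvd : a ∣ m - b * (c' + t * a) :=
      (Nat.modEq_iff_dvd' (by omega)).mp hmod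
    have hx : a * ((m - b * (c' + t * a)) / a) = m - b * (c' + t * a) :=
      Nat.mul_div_cancel' hdvd
    simp only [hS, hg, Set.mem_setOf_eq]
    refine ⟨Nat.div_pos (by omega) (by omega), by omega, by omega⟩
  have hinj : Set.InjOn g (Set.Iio (j + 1)) := by
    intro t _ t' _ heq
    have h1 : c' + t * a = c' + t' * a := congrArg Prod.snd heq
    have h2 : t * a = t' * a := by omega
    exact Nat.eq_of_mul_eq_mul_right (by omega : 0 < a) h2
  calc j + 1 = (Finset.Iio (j + 1)).card := (Nat.card_Iio _).symm
    _ = (Set.Iio (j + 1)).ncard := by rw [← Finset.coe_Iio, Set.ncard_coe_finset]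
    _ = (g '' Set.Iio (j + 1)).ncard := (Set.ncard_image_of_injOn hinj).symm
    _ ≤ S.ncard := Set.ncard_le_ncard (by
        rintro q ⟨t, ht, rfl⟩
        exact hmem t ht) hfin
    _ = ell a b m := rfl

lemma padicValNat_prod (p : ℕ) (hp : p.Prime) (s : Finset ℕ) (hs : ∀ m ∈ s, m ≠ 0) :
    padicValNat p (∏ m ∈ s, m) = ∑ m ∈ s, padicValNat p m := by
  have h := Nat.factorization_prod (g := id) hs
  have h2 := congrArg (fun f => f p) h
  simp only [Finset.sum_apply'] at h2
  rw [Nat.factorization_def _ hp] at h2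
  simp only [id_eq] at h2
  rw [show (∏ m ∈ s, m) = ∏ x ∈ s, x from rfl, h2]
  exact Finset.sum_congr rfl (fun x _ => Nat.factorization_def _ hp)

end EllAux

theorem sum_padicValNat_ell_lt (a b : ℕ) (ha : 2 ≤ a) (hb : 2 ≤ b)
    (hab : Nat.gcd a b = 1) (p : ℕ) (hp : p.Prime) (i : ℕ) (hi : 1 ≤ i)
    (hfin : {m : ℕ | 1 ≤ m ∧ ell a b m < i}.Finite) :
    ∑ m ∈ hfin.toFinset, padicValNat p m =
      padicValNat p (Nat.factorial (a * b * i)) -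
        padicValNat p
          (∏ m ∈ (Finset.Icc 1 (a * b * i)).filter (fun m => ell a b m = i), m) := by
  set N := a * b * i with hN
  have hset : hfin.toFinset = (Finset.Icc 1 N).filter (fun m => ell a b m < i) := by
    ext m
    simp only [Set.Finite.mem_toFinset, Set.mem_setOf_eq, Finset.mem_filter, Finset.mem_Icc]
    constructor
    · rintro ⟨h1, h2⟩
      refine ⟨⟨h1, ?_⟩, h2⟩
      by_contra hcon
      push_neg at hcon
      exact absurd (EllAux.le_ell a b m i ha hb hab hi hcon) (by omega)
    · rintro ⟨⟨h1, _⟩, h2⟩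
      exact ⟨h1, h2⟩
  have hfilter : (Finset.Icc 1 N).filter (fun m => ¬ ell a b m < i) =
      (Finset.Icc 1 N).filter (fun m => ell a b m = i) := by
    apply Finset.filter_congr
    intro m hm
    simp only [Finset.mem_Icc] at hm
    have hle := EllAux.ell_le a b m i ha hb hab hm.2
    simp only [not_lt, eq_comm]
    constructor <;> intro h <;> omega
  have hfact : padicValNat p (Nat.factorial N) = ∑ m ∈ Finset.Icc 1 N, padicValNat p m := by
    rw [← Finset.prod_Ico_id_eq_factorial N, ← Finset.Ico_add_one_right_eq_Icc]
    exact EllAux.padicValNat_prod p hp _ (fun m hm => by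
      simp only [Finset.mem_Ico] at hm; omega)
  have hprod : padicValNat p
      (∏ m ∈ (Finset.Icc 1 N).filter (fun m => ell a b m = i), m) =
      ∑ m ∈ (Finset.Icc 1 N).filter (fun m => ell a b m = i), padicValNat p m :=
    EllAux.padicValNat_prod p hp _ (fun m hm => by
      simp only [Finset.mem_filter, Finset.mem_Icc] at hm; omega)
  have hsplit : ∑ m ∈ Finset.Icc 1 N, padicValNat p m =
      (∑ m ∈ (Finset.Icc 1 N).filter (fun m => ell a b m < i), padicValNat p m) +
      ∑ m ∈ (Finset.Icc 1 N).filter (fun m => ell a b m = i), padicValNat p m := by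
    rw [← hfilter]
    exact (Finset.sum_filter_add_sum_filter_not _ _ _).symm
  rw [hset, hfact, hprod, hsplit]
  omega
end

section
/- Let a, b ≥ 2 be coprime natural numbers, let p be a prime, and let i ≥ 1. Then the sum over the finite set of natural numbers m ≥ 1 with ℓ(a,b,m) < i of the p-adic valuation ν_p(i − ℓ(a,b,m)) equals a·b·ν_p(i!) − ((a−1)(b−1)/2)·ν_p(i). (Here (a−1)(b−1) is even since a and b are coprime.) -/
namespace EllAux

open Finset

open scoped Classical in
/-- The set of `x`-coordinates of solutions. -/
noncomputable def Xf (a b m : ℕ) : Finset ℕ :=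
  (Finset.Icc 1 m).filter fun x => a * x + b ≤ m ∧ b ∣ (m - a * x)

lemma mem_Xf {a b m x : ℕ} :
    x ∈ Xf a b m ↔ (1 ≤ x ∧ x ≤ m) ∧ a * x + b ≤ m ∧ b ∣ (m - a * x) := by
  classical
  simp [Xf, Finset.mem_filter, Finset.mem_Icc]

lemma ell_eq_card {a b : ℕ} (ha : 1 ≤ a) (hb : 1 ≤ b) (m : ℕ) :
    ell a b m = (Xf a b m).card := by
  classical
  have hset : {p : ℕ × ℕ | 0 < p.1 ∧ 0 < p.2 ∧ m = a * p.1 + b * p.2} =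
      ↑(((Finset.Icc 1 m) ×ˢ (Finset.Icc 1 m)).filter fun q => m = a * q.1 + b * q.2) := by
    ext q
    simp only [Set.mem_setOf_eq, Finset.coe_filter, Finset.mem_product, Finset.mem_Icc,
      Set.mem_setOf_eq]
    constructor
    · rintro ⟨h1, h2, h3⟩
      have e1 : q.1 ≤ a * q.1 := Nat.le_mul_of_pos_left q.1 (by omega)
      have e2 : q.2 ≤ b * q.2 := Nat.le_mul_of_pos_left q.2 (by omega)
      exact ⟨⟨⟨h1, by omega⟩, ⟨h2, by omega⟩⟩, h3⟩
    · rintro ⟨⟨⟨h1, _⟩, ⟨h2, _⟩⟩, h3⟩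
      exact ⟨h1, h2, h3⟩
  rw [ell, hset, Set.ncard_coe_finset]
  apply Finset.card_bij (fun q _ => q.1)
  · rintro q hq
    simp only [Finset.mem_filter, Finset.mem_product, Finset.mem_Icc] at hq
    obtain ⟨⟨⟨h1, h1'⟩, ⟨h2, h2'⟩⟩, h3⟩ := hq
    have e2 : b ≤ b * q.2 := Nat.le_mul_of_pos_right b (by omega)
    rw [mem_Xf]
    exact ⟨⟨h1, h1'⟩, by omega, ⟨q.2, by omega⟩⟩
  · rintro q hq q' hq' hEq
    simp only [Finset.mem_filter, Finset.mem_product, Finset.mem_Icc] at hq hq'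
    obtain ⟨⟨⟨h1, h1'⟩, ⟨h2, h2'⟩⟩, h3⟩ := hq
    obtain ⟨⟨⟨g1, g1'⟩, ⟨g2, g2'⟩⟩, g3⟩ := hq'
    have : b * q.2 = b * q'.2 := by rw [hEq] at h3; omega
    have : q.2 = q'.2 := Nat.eq_of_mul_eq_mul_left (by omega) this
    exact Prod.ext hEq this
  · intro x hx
    rw [mem_Xf] at hx
    obtain ⟨⟨h1, h1'⟩, h2, h3⟩ := hx
    obtain ⟨c, hc⟩ := h3
    refine ⟨(x, c), ?_, rfl⟩
    simp only [Finset.mem_filter, Finset.mem_product, Finset.mem_Icc]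
    have hc1 : 1 ≤ c := by
      rcases Nat.eq_zero_or_pos c with h | h
      · subst h; omega
      · exact h
    have hc2 : c ≤ b * c := Nat.le_mul_of_pos_left c (by omega)
    exact ⟨⟨⟨h1, h1'⟩, ⟨hc1, by omega⟩⟩, by omega⟩

lemma x_modEq {a b m x x' : ℕ} (hab : Nat.gcd a b = 1)
    (hx : a * x ≤ m) (hx' : a * x' ≤ m)
    (d : b ∣ m - a * x) (d' : b ∣ m - a * x') : x ≡ x' [MOD b] := by
  have h1 : a * x ≡ m [MOD b] := (Nat.modEq_iff_dvd' hx).mpr d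
  have h2 : a * x' ≡ m [MOD b] := (Nat.modEq_iff_dvd' hx').mpr d'
  refine Nat.ModEq.cancel_left_of_coprime ?_ (h1.trans h2.symm)
  rwa [Nat.gcd_comm] at hab

lemma eq_of_modEq {b x x' : ℕ} (h : x ≡ x' [MOD b])
    (h1 : 1 ≤ x) (h2 : x ≤ b) (h3 : 1 ≤ x') (h4 : x' ≤ b) : x = x' := by
  rcases le_total x x' with hle | hle
  · have hd := (Nat.modEq_iff_dvd' hle).mp h
    rcases Nat.eq_zero_or_pos (x' - x) with h0 | h0
    · omega
    · have := Nat.le_of_dvd h0 hd; omega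
  · have hd := (Nat.modEq_iff_dvd' hle).mp h.symm
    rcases Nat.eq_zero_or_pos (x - x') with h0 | h0
    · omega
    · have := Nat.le_of_dvd h0 hd; omega

variable {a b : ℕ}

lemma card_Xf_add (ha : 2 ≤ a) (hb : 2 ≤ b) (hab : Nat.gcd a b = 1) {m : ℕ} (hm : 1 ≤ m) :
    (Xf a b (m + a * b)).card = (Xf a b m).card + 1 := by
  classical
  have hsplit := Finset.card_filter_add_card_filter_not
    (s := Xf a b (m + a * b)) (p := fun x => x ≤ b)
  have hupper : (((Xf a b (m + a * b)).filter fun x => ¬ x ≤ b)).card = (Xf a b m).card := by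
    apply Finset.card_bij' (fun x _ => x - b) (fun x _ => x + b)
    · intro x hx
      rw [Finset.mem_filter, mem_Xf] at hx
      obtain ⟨⟨⟨h1, h1'⟩, h2, h3⟩, hbx⟩ := hx
      push_neg at hbx
      have e1 : a * (x - b) + a * b = a * x := by
        rw [← Nat.mul_add, Nat.sub_add_cancel (le_of_lt hbx)]
      have e2 : x - b ≤ a * (x - b) := Nat.le_mul_of_pos_left _ (by omega)
      obtain ⟨c, hc⟩ := h3
      rw [mem_Xf]
      exact ⟨⟨by omega, by omega⟩, by omega, ⟨c, by omega⟩⟩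
    · intro x hx
      rw [mem_Xf] at hx
      obtain ⟨⟨h1, h1'⟩, h2, h3⟩ := hx
      have e1 : a * (x + b) = a * x + a * b := by ring
      have e2 : b ≤ a * b := Nat.le_mul_of_pos_left b (by omega)
      obtain ⟨c, hc⟩ := h3
      rw [Finset.mem_filter, mem_Xf]
      exact ⟨⟨⟨by omega, by omega⟩, by omega, ⟨c, by omega⟩⟩, by omega⟩
    · intro x hx
      rw [Finset.mem_filter] at hx
      omega
    · intro x hx; omega
  have hlower : (((Xf a b (m + a * b)).filter fun x => x ≤ b)).card = 1 := by
    rw [Finset.card_eq_one]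
    haveI : NeZero b := ⟨by omega⟩
    have hab' : Nat.Coprime a b := hab
    have haunit : IsUnit (a : ZMod b) := by
      refine ⟨ZMod.unitOfCoprime a hab', ZMod.coe_unitOfCoprime a hab'⟩
    set z : ZMod b := (m : ZMod b) * (a : ZMod b)⁻¹ with hz
    set x₀ : ℕ := if z.val = 0 then b else z.val with hx₀
    have hx₀1 : 1 ≤ x₀ := by
      rw [hx₀]; split <;> omega
    have hx₀b : x₀ ≤ b := by
      have := ZMod.val_lt z
      rw [hx₀]; split <;> omega
    have hcast : ((x₀ : ℕ) : ZMod b) = z := by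
      rw [hx₀]
      split
      · rename_i h0
        rw [(ZMod.val_eq_zero z).mp h0]
        exact ZMod.natCast_self b
      · rw [ZMod.natCast_val, ZMod.cast_id]
    have hax : (a : ZMod b) * ((x₀ : ℕ) : ZMod b) = (m : ZMod b) := by
      rw [hcast, hz]
      calc (a : ZMod b) * ((m : ZMod b) * (a : ZMod b)⁻¹)
          = (m : ZMod b) * ((a : ZMod b) * (a : ZMod b)⁻¹) := by ring
        _ = (m : ZMod b) := by rw [ZMod.mul_inv_of_unit _ haunit, mul_one]
    have hle : a * x₀ ≤ a * b := Nat.mul_le_mul_left a hx₀b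
    have hle2 : a * x₀ ≤ m + a * b := by omega
    have hdvd : b ∣ (m + a * b) - a * x₀ := by
      rw [← ZMod.natCast_eq_zero_iff _ b, Nat.cast_sub hle2]
      push_cast
      rw [ZMod.natCast_self, hax]  -- may need adjusting
      ring
    have hpos : 1 ≤ (m + a * b) - a * x₀ := by omega
    have hge : b ≤ (m + a * b) - a * x₀ := Nat.le_of_dvd hpos hdvd
    have hx₀mem : x₀ ∈ (Xf a b (m + a * b)).filter fun x => x ≤ b := by
      rw [Finset.mem_filter, mem_Xf]
      have : b ≤ a * b := Nat.le_mul_of_pos_left b (by omega)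
      exact ⟨⟨⟨hx₀1, by omega⟩, by omega, hdvd⟩, hx₀b⟩
    refine ⟨x₀, Finset.eq_singleton_iff_unique_mem.mpr ⟨hx₀mem, ?_⟩⟩
    intro x hx
    rw [Finset.mem_filter, mem_Xf] at hx
    obtain ⟨⟨⟨g1, _⟩, g2, g3⟩, gb⟩ := hx
    exact eq_of_modEq (x_modEq hab (by omega) hle2 g3 hdvd) g1 gb hx₀1 hx₀b
  omega

lemma ell_add (ha : 2 ≤ a) (hb : 2 ≤ b) (hab : Nat.gcd a b = 1) {m : ℕ} (hm : 1 ≤ m) :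
    ell a b (m + a * b) = ell a b m + 1 := by
  rw [ell_eq_card (by omega) (by omega), ell_eq_card (by omega) (by omega),
    card_Xf_add ha hb hab hm]

lemma ell_add_mul (ha : 2 ≤ a) (hb : 2 ≤ b) (hab : Nat.gcd a b = 1) {m : ℕ} (hm : 1 ≤ m)
    (t : ℕ) : ell a b (m + a * b * t) = ell a b m + t := by
  induction t with
  | zero => simp
  | succ t ih =>
      have e1 : m + a * b * (t + 1) = (m + a * b * t) + a * b := by ring
      have e2 : 1 ≤ m + a * b * t := by omega
      rw [e1, ell_add ha hb hab e2, ih]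
      omega

lemma le_of_ell_eq (ha : 2 ≤ a) (hb : 2 ≤ b) (hab : Nat.gcd a b = 1) {m k : ℕ}
    (hm : 1 ≤ m) (hk : ell a b m = k) : m ≤ a * b * (k + 1) := by
  by_contra h
  push_neg at h
  have hr : 1 ≤ m - a * b * (k + 1) := by omega
  have he : m = (m - a * b * (k + 1)) + a * b * (k + 1) := by omega
  rw [he, ell_add_mul ha hb hab hr] at hk
  omega

lemma ell_le_one (ha : 2 ≤ a) (hb : 2 ≤ b) (hab : Nat.gcd a b = 1) {m : ℕ}
    (hm2 : m ≤ a * b) : ell a b m ≤ 1 := by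
  rw [ell_eq_card (by omega) (by omega)]
  apply Finset.card_le_one.mpr
  intro x hx x' hx'
  rw [mem_Xf] at hx hx'
  obtain ⟨⟨h1, h1'⟩, h2, h3⟩ := hx
  obtain ⟨⟨g1, g1'⟩, g2, g3⟩ := hx'
  have hxb : x ≤ b := by
    by_contra hc
    push_neg at hc
    have : a * b ≤ a * x := Nat.mul_le_mul_left a (by omega)
    omega
  have hxb' : x' ≤ b := by
    by_contra hc
    push_neg at hc
    have : a * b ≤ a * x' := Nat.mul_le_mul_left a (by omega)
    omega
  exact eq_of_modEq (x_modEq hab (by omega) (by omega) h3 g3) h1 hxb g1 hxb'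

lemma ell_eq_one (ha : 2 ≤ a) (hb : 2 ≤ b) (hab : Nat.gcd a b = 1) {x y : ℕ}
    (hx1 : 1 ≤ x) (hy1 : 1 ≤ y) (hlt : a * x + b * y ≤ a * b) :
    ell a b (a * x + b * y) = 1 := by
  refine le_antisymm (ell_le_one ha hb hab hlt) ?_
  rw [ell_eq_card (by omega) (by omega)]
  rw [Nat.succ_le_iff, Finset.card_pos]
  refine ⟨x, ?_⟩
  rw [mem_Xf]
  have e1 : x ≤ a * x := Nat.le_mul_of_pos_left x (by omega)
  have e2 : b ≤ b * y := Nat.le_mul_of_pos_right b (by omega)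
  exact ⟨⟨hx1, by omega⟩, by omega, ⟨y, by omega⟩⟩

open scoped Classical in
noncomputable def Fk (a b k : ℕ) : Finset ℕ :=
  (Finset.Icc 1 (a * b * (k + 1))).filter fun m => ell a b m = k

lemma mem_Fk (ha : 2 ≤ a) (hb : 2 ≤ b) (hab : Nat.gcd a b = 1) {k m : ℕ} :
    m ∈ Fk a b k ↔ 1 ≤ m ∧ ell a b m = k := by
  classical
  simp only [Fk, Finset.mem_filter, Finset.mem_Icc]
  constructor
  · rintro ⟨⟨h1, _⟩, h2⟩; exact ⟨h1, h2⟩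
  · rintro ⟨h1, h2⟩
    exact ⟨⟨h1, le_of_ell_eq ha hb hab h1 h2⟩, h2⟩

lemma card_one_fiber (ha : 2 ≤ a) (hb : 2 ≤ b) (hab : Nat.gcd a b = 1) :
    ((Finset.Icc 1 (a * b)).filter fun m => ell a b m = 1).card = (a - 1) * (b - 1) / 2 := by
  classical
  set T : Finset (ℕ × ℕ) := (Finset.Ico 1 b) ×ˢ (Finset.Ico 1 a) with hT
  have hmemT : ∀ q : ℕ × ℕ, q ∈ T ↔ (1 ≤ q.1 ∧ q.1 < b) ∧ (1 ≤ q.2 ∧ q.2 < a) := by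
    intro q; simp [hT, Finset.mem_product, Finset.mem_Ico]
  have hne : ∀ q ∈ T, a * q.1 + b * q.2 ≠ a * b := by
    intro q hq hEq
    rw [hmemT] at hq
    have hco : Nat.Coprime b a := by rwa [Nat.gcd_comm] at hab
    have hmm : a * b = b * a := Nat.mul_comm a b
    have hsub : b * (a - q.2) = b * a - b * q.2 := Nat.mul_sub b a q.2
    have hd : b ∣ q.1 := by
      refine Nat.Coprime.dvd_of_dvd_mul_left hco ⟨a - q.2, ?_⟩
      omega
    have := Nat.le_of_dvd (by omega) hd
    omega
  have h1 : (T.filter fun q => a * q.1 + b * q.2 < a * b).card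
      = ((Finset.Icc 1 (a * b)).filter fun m => ell a b m = 1).card := by
    apply Finset.card_bij (fun q _ => a * q.1 + b * q.2)
    · intro q hq
      rw [Finset.mem_filter] at hq
      obtain ⟨hqT, hqlt⟩ := hq
      rw [hmemT] at hqT
      rw [Finset.mem_filter, Finset.mem_Icc]
      have e1 : 1 ≤ a * q.1 := by
        have := Nat.mul_le_mul (show 1 ≤ a by omega) (show 1 ≤ q.1 by omega)
        omega
      refine ⟨⟨by omega, by omega⟩, ?_⟩
      exact ell_eq_one ha hb hab (by omega) (by omega) (by omega)
    · intro q hq q' hq' hEq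
      rw [Finset.mem_filter] at hq hq'
      obtain ⟨hqT, hqlt⟩ := hq
      obtain ⟨hq'T, hq'lt⟩ := hq'
      rw [hmemT] at hqT hq'T
      have hmod : q.1 ≡ q'.1 [MOD b] := by
        refine x_modEq hab (m := a * q.1 + b * q.2) (by omega) (by omega) ⟨q.2, by omega⟩ ⟨q'.2, by omega⟩
      have hx : q.1 = q'.1 := eq_of_modEq hmod (by omega) (by omega) (by omega) (by omega)
      have hy : b * q.2 = b * q'.2 := by rw [hx] at hEq; omega
      have hy' : q.2 = q'.2 := Nat.eq_of_mul_eq_mul_left (by omega) hy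
      exact Prod.ext hx hy'
    · intro m hm
      rw [Finset.mem_filter, Finset.mem_Icc] at hm
      obtain ⟨⟨hm1, hm2⟩, hml⟩ := hm
      have hcard : (Xf a b m).card = 1 := by
        rw [← ell_eq_card (by omega) (by omega), hml]
      have hpos : (Xf a b m).Nonempty := Finset.card_pos.mp (by omega)
      obtain ⟨x, hx⟩ := hpos
      rw [mem_Xf] at hx
      obtain ⟨⟨h1, h1'⟩, h2, h3⟩ := hx
      obtain ⟨y, hby⟩ := h3
      have hxb : x < b := by
        by_contra hc
        push_neg at hc
        have : a * b ≤ a * x := Nat.mul_le_mul_left a hc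
        omega
      have hy1 : 1 ≤ y := by
        rcases Nat.eq_zero_or_pos y with h | h
        · rw [h, Nat.mul_zero] at hby; omega
        · exact h
      have hya : y < a := by
        by_contra hc
        push_neg at hc
        have e1 : b * a ≤ b * y := Nat.mul_le_mul_left b hc
        have e2 : a ≤ a * x := Nat.le_mul_of_pos_right a (by omega)
        have hmm : a * b = b * a := Nat.mul_comm a b
        omega
      have hsum : a * x + b * y = m := by omega
      have hlt : a * x + b * y < a * b := by
        rcases Nat.lt_or_ge m (a * b) with h | h
        · omega
        · exfalso
          have hmeq : m = a * b := by omega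
          have hdb : b ∣ m := ⟨a, by rw [hmeq, Nat.mul_comm]⟩
          have hdax : b ∣ a * x := by
            have hsub := Nat.dvd_sub hdb ⟨y, hby⟩
            have he : m - (m - a * x) = a * x := by omega
            rwa [he] at hsub
          have hco : Nat.Coprime b a := by rwa [Nat.gcd_comm] at hab
          have hdx : b ∣ x := Nat.Coprime.dvd_of_dvd_mul_left hco hdax
          have := Nat.le_of_dvd (by omega) hdx
          omega
      refine ⟨(x, y), ?_, hsum⟩
      rw [Finset.mem_filter, hmemT]
      exact ⟨⟨⟨h1, hxb⟩, ⟨hy1, hya⟩⟩, hlt⟩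
  have h2 : (T.filter fun q => a * q.1 + b * q.2 < a * b).card
      = (T.filter fun q => ¬ a * q.1 + b * q.2 < a * b).card := by
    apply Finset.card_bij' (fun q _ => ((b : ℕ) - q.1, (a : ℕ) - q.2))
      (fun q _ => ((b : ℕ) - q.1, (a : ℕ) - q.2))
    · intro q hq
      rw [Finset.mem_filter] at hq
      obtain ⟨hqT, hqlt⟩ := hq
      have hqT' := hqT
      rw [hmemT] at hqT'
      rw [Finset.mem_filter, hmemT]
      dsimp only
      have e1 : a * (b - q.1) = a * b - a * q.1 := Nat.mul_sub a b q.1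
      have e2 : b * (a - q.2) = b * a - b * q.2 := Nat.mul_sub b a q.2
      have hmm : a * b = b * a := Nat.mul_comm a b
      have ha1 : a * q.1 ≤ a * b := Nat.mul_le_mul_left a (by omega)
      have hb1 : b * q.2 ≤ b * a := Nat.mul_le_mul_left b (by omega)
      refine ⟨⟨by omega, by omega⟩, by omega⟩
    · intro q hq
      rw [Finset.mem_filter] at hq
      obtain ⟨hqT, hqlt⟩ := hq
      have hne' := hne q hqT
      rw [hmemT] at hqT
      rw [Finset.mem_filter, hmemT]
      dsimp only
      have e1 : a * (b - q.1) = a * b - a * q.1 := Nat.mul_sub a b q.1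
      have e2 : b * (a - q.2) = b * a - b * q.2 := Nat.mul_sub b a q.2
      have hmm : a * b = b * a := Nat.mul_comm a b
      have ha1 : a * q.1 ≤ a * b := Nat.mul_le_mul_left a (by omega)
      have hb1 : b * q.2 ≤ b * a := Nat.mul_le_mul_left b (by omega)
      refine ⟨⟨by omega, by omega⟩, by omega⟩
    · intro q hq
      rw [Finset.mem_filter, hmemT] at hq
      have : (b - (b - q.1), a - (a - q.2)) = (q.1, q.2) := by
        rw [Prod.mk.injEq]; omega
      simpa using this
    · intro q hq
      rw [Finset.mem_filter, hmemT] at hq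
      have : (b - (b - q.1), a - (a - q.2)) = (q.1, q.2) := by
        rw [Prod.mk.injEq]; omega
      simpa using this
  have h3 := Finset.card_filter_add_card_filter_not
    (s := T) (p := fun q => a * q.1 + b * q.2 < a * b)
  have hTcard : T.card = (b - 1) * (a - 1) := by
    rw [hT, Finset.card_product, Nat.card_Ico, Nat.card_Ico]
  have hmm : (a - 1) * (b - 1) = (b - 1) * (a - 1) := Nat.mul_comm _ _
  omega

lemma c1_le (ha : 2 ≤ a) (hb : 2 ≤ b) : (a - 1) * (b - 1) / 2 ≤ a * b := by
  have h1 : (a - 1) * (b - 1) ≤ a * b := Nat.mul_le_mul (by omega) (by omega)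
  have h2 : (a - 1) * (b - 1) / 2 ≤ (a - 1) * (b - 1) := Nat.div_le_self _ _
  omega

lemma card_F0 (ha : 2 ≤ a) (hb : 2 ≤ b) (hab : Nat.gcd a b = 1) :
    (Fk a b 0).card = a * b - (a - 1) * (b - 1) / 2 := by
  classical
  have hsplit := Finset.card_filter_add_card_filter_not
    (s := Finset.Icc 1 (a * b)) (p := fun m => ell a b m = 1)
  have hcongr : Fk a b 0 = (Finset.Icc 1 (a * b)).filter fun m => ¬ ell a b m = 1 := by
    have e : a * b * (0 + 1) = a * b := by ring
    rw [Fk, e]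
    apply Finset.filter_congr
    intro m hm
    rw [Finset.mem_Icc] at hm
    have := ell_le_one ha hb hab (m := m) (by omega)
    omega
  rw [hcongr]
  rw [card_one_fiber ha hb hab] at hsplit
  have := Nat.card_Icc 1 (a * b)
  omega

lemma card_Fk (ha : 2 ≤ a) (hb : 2 ≤ b) (hab : Nat.gcd a b = 1) :
    ∀ {k : ℕ}, 1 ≤ k → (Fk a b k).card = a * b := by
  classical
  intro k
  induction k with
  | zero => omega
  | succ k ih =>
      intro _
      have hUsplit : Finset.Icc 1 (a * b * (k + 2)) =
          Finset.Icc 1 (a * b) ∪ Finset.Icc (a * b + 1) (a * b * (k + 2)) := by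
        have e : a * b ≤ a * b * (k + 2) := Nat.le_mul_of_pos_right _ (by omega)
        ext m
        simp only [Finset.mem_Icc, Finset.mem_union]
        omega
      have hFk : Fk a b (k + 1) =
          ((Finset.Icc 1 (a * b)).filter fun m => ell a b m = k + 1) ∪
          ((Finset.Icc (a * b + 1) (a * b * (k + 2))).filter fun m => ell a b m = k + 1) := by
        rw [Fk]
        have e : k + 1 + 1 = k + 2 := rfl
        rw [e, hUsplit, Finset.filter_union]
      have hdisj : Disjoint
          ((Finset.Icc 1 (a * b)).filter fun m => ell a b m = k + 1)
          ((Finset.Icc (a * b + 1) (a * b * (k + 2))).filter fun m => ell a b m = k + 1) := by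
        rw [Finset.disjoint_left]
        intro m h1 h2
        rw [Finset.mem_filter, Finset.mem_Icc] at h1 h2
        omega
      have hupper : ((Finset.Icc (a * b + 1) (a * b * (k + 2))).filter
          fun m => ell a b m = k + 1).card = (Fk a b k).card := by
        apply Finset.card_bij' (fun m _ => m - a * b) (fun m _ => m + a * b)
        · intro m hm
          rw [Finset.mem_filter, Finset.mem_Icc] at hm
          obtain ⟨⟨h1, h2⟩, h3⟩ := hm
          have e : m - a * b + a * b = m := by omega
          have hell : ell a b (m - a * b) + 1 = k + 1 := by
            rw [← ell_add ha hb hab (by omega), e, h3]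
          rw [mem_Fk ha hb hab]
          exact ⟨by omega, by omega⟩
        · intro m hm
          rw [mem_Fk ha hb hab] at hm
          obtain ⟨h1, h2⟩ := hm
          have hbd := le_of_ell_eq ha hb hab h1 h2
          have e : a * b * (k + 2) = a * b * (k + 1) + a * b := by ring
          rw [Finset.mem_filter, Finset.mem_Icc]
          refine ⟨⟨by omega, by omega⟩, ?_⟩
          rw [ell_add ha hb hab h1, h2]
        · intro m hm
          rw [Finset.mem_filter, Finset.mem_Icc] at hm
          omega
        · intro m _; omega
      rcases Nat.eq_zero_or_pos k with hk0 | hk0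
      · subst hk0
        rw [hFk, Finset.card_union_of_disjoint hdisj, hupper, card_F0 ha hb hab,
          card_one_fiber ha hb hab]
        have := c1_le ha hb
        omega
      · have hlow : ((Finset.Icc 1 (a * b)).filter fun m => ell a b m = k + 1) = ∅ := by
          rw [Finset.filter_eq_empty_iff]
          intro m hm
          rw [Finset.mem_Icc] at hm
          have := ell_le_one ha hb hab (m := m) (by omega)
          omega
        rw [hFk, Finset.card_union_of_disjoint hdisj, hupper, hlow, Finset.card_empty,
          ih hk0]
        omega

lemma sum_nu_fact (p : ℕ) (hp : p.Prime) (n : ℕ) :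
    ∑ j ∈ Finset.range n, padicValNat p (j + 1) = padicValNat p n.factorial := by
  haveI : Fact p.Prime := ⟨hp⟩
  induction n with
  | zero => simp
  | succ n ih =>
      rw [Finset.sum_range_succ, ih, Nat.factorial_succ,
        padicValNat.mul (by omega) (Nat.factorial_ne_zero n)]
      omega

end EllAux

theorem sum_padicValNat_sub_ell (a b : ℕ) (ha : 2 ≤ a) (hb : 2 ≤ b)
    (hab : Nat.gcd a b = 1) (p : ℕ) (hp : p.Prime) (i : ℕ) (hi : 1 ≤ i)
    (hfin : {m : ℕ | 1 ≤ m ∧ ell a b m < i}.Finite) :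
    ∑ m ∈ hfin.toFinset, padicValNat p (i - ell a b m) =
      a * b * padicValNat p (Nat.factorial i) -
        (a - 1) * (b - 1) / 2 * padicValNat p i := by
  classical
  have key : ∀ k, k < i → (hfin.toFinset.filter fun m => ell a b m = k) = EllAux.Fk a b k := by
    intro k hk
    ext m
    rw [Finset.mem_filter, Set.Finite.mem_toFinset, EllAux.mem_Fk ha hb hab]
    simp only [Set.mem_setOf_eq]
    constructor
    · rintro ⟨⟨h1, _⟩, h2⟩; exact ⟨h1, h2⟩
    · rintro ⟨h1, h2⟩; exact ⟨⟨h1, by omega⟩, h2⟩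
  have hmaps : ∀ m ∈ hfin.toFinset, ell a b m ∈ Finset.range i := by
    intro m hm
    rw [Set.Finite.mem_toFinset] at hm
    exact Finset.mem_range.mpr hm.2
  rw [← Finset.sum_fiberwise_of_maps_to hmaps (fun m => padicValNat p (i - ell a b m))]
  have hinner : ∀ k ∈ Finset.range i,
      (∑ m ∈ hfin.toFinset.filter (fun m => ell a b m = k), padicValNat p (i - ell a b m))
        = (EllAux.Fk a b k).card * padicValNat p (i - k) := by
    intro k hk
    rw [key k (Finset.mem_range.mp hk)]
    rw [Finset.sum_congr rfl (fun m hm => by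
      rw [((EllAux.mem_Fk ha hb hab).mp hm).2] : ∀ m ∈ EllAux.Fk a b k,
        padicValNat p (i - ell a b m) = padicValNat p (i - k))]
    rw [Finset.sum_const, smul_eq_mul]
  rw [Finset.sum_congr rfl hinner]
  rw [Finset.range_eq_Ico, Finset.sum_eq_sum_Ico_succ_bot (by omega : 0 < i)]
  have hsum1 : ∑ k ∈ Finset.Ico 1 i, (EllAux.Fk a b k).card * padicValNat p (i - k)
      = a * b * ∑ k ∈ Finset.Ico 1 i, padicValNat p (i - k) := by
    rw [Finset.mul_sum]
    refine Finset.sum_congr rfl fun k hk => ?_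
    rw [Finset.mem_Ico] at hk
    rw [EllAux.card_Fk ha hb hab hk.1]
  have hfact : padicValNat p i + ∑ k ∈ Finset.Ico 1 i, padicValNat p (i - k)
      = padicValNat p i.factorial := by
    have h0 : ∑ k ∈ Finset.range i, padicValNat p (i - k)
        = padicValNat p i + ∑ k ∈ Finset.Ico 1 i, padicValNat p (i - k) := by
      rw [Finset.range_eq_Ico, Finset.sum_eq_sum_Ico_succ_bot (by omega : 0 < i)]
      rw [Nat.sub_zero]
    have h1 : ∑ k ∈ Finset.range i, padicValNat p (i - k)
        = ∑ j ∈ Finset.range i, padicValNat p (j + 1) := by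
      rw [← Finset.sum_range_reflect (fun j => padicValNat p (j + 1)) i]
      refine Finset.sum_congr rfl fun j hj => ?_
      rw [Finset.mem_range] at hj
      congr 1
      omega
    rw [← h0, h1, EllAux.sum_nu_fact p hp]
  rw [EllAux.card_F0 ha hb hab, hsum1, Nat.sub_zero, ← hfact]
  have hc := EllAux.c1_le (a := a) (b := b) ha hb
  set c := (a - 1) * (b - 1) / 2 with hcdef
  set A := padicValNat p i with hA
  set B := ∑ k ∈ Finset.Ico 1 i, padicValNat p (i - k) with hB
  have h2 : c * A ≤ a * b * (A + B) := by
    calc c * A ≤ a * b * A := Nat.mul_le_mul_right A hc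
      _ ≤ a * b * (A + B) := Nat.mul_le_mul_left _ (Nat.le_add_right A B)
  zify [hc, h2]
  ring
end
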